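/- The pointwise product of two Schwartz levees is a Schwartz levee: let X be a real inner product space, let V₁, V₂ ⊆ X be finite-dimensional subspaces, and let g_i : V_i → ℂ be Schwartz functions on the finite-dimensional inner product spaces V_i (i = 1, 2). Then there exists a Schwartz function g : V₁ + V₂ → ℂ such that for all y ∈ X: g₁(P_{V₁} y) · g₂(P_{V₂} y) = g(P_{V₁+V₂} y). -/

import Mathlib

open Filter Topology
open scoped BoundedContinuousFunction InnerProductSpace ContDiff

noncomputable section

section Aux

variable {X : Type*} [NormedAddCommGroup X] [InnerProductSpace ℝ X]

/-- Norm bound for iterated derivative of a Schwartz map composed with a CLM of norm ≤ 1. -/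
lemma norm_iteratedFDeriv_schwartz_comp_le {E F : Type*} [NormedAddCommGroup E]
    [NormedSpace ℝ E] [NormedAddCommGroup F] [NormedSpace ℝ F]
    (f : SchwartzMap F ℂ) (P : E →L[ℝ] F) (hP : ‖P‖ ≤ 1) (i : ℕ) (v : E) :
    ‖iteratedFDeriv ℝ i (fun w => f (P w)) v‖ ≤ ‖iteratedFDeriv ℝ i f (P v)‖ := by
  have h := P.iteratedFDeriv_comp_right (f := f) f.smooth' v (i := i) (by exact_mod_cast le_top)
  have h2 : (fun w => f (P w)) = (⇑f) ∘ ⇑P := rfl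
  rw [h2, h]
  refine le_trans (ContinuousMultilinearMap.norm_compContinuousLinearMap_le _ _) ?_
  have hprod : ∏ _j : Fin i, ‖P‖ ≤ 1 := by
    calc ∏ _j : Fin i, ‖P‖ ≤ ∏ _j : Fin i, (1:ℝ) :=
          Finset.prod_le_prod (fun _ _ => norm_nonneg _) (fun _ _ => hP)
      _ = 1 := by simp
  exact le_trans (mul_le_mul_of_nonneg_left hprod (norm_nonneg _)) (le_of_eq (mul_one _))

end Aux


/-- the pointwise product of two Schwartz levees is a Schwartz levee: if
`V₁, V₂ ⊆ X` are finite dimensional subspaces and `gᵢ` are Schwartz functions on `Vᵢ`, then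
there is a Schwartz function `g` on `V₁ + V₂` with
`g₁(P_{V₁} y) · g₂(P_{V₂} y) = g(P_{V₁+V₂} y)` for all `y ∈ X`. -/
theorem mul_schwartzLevee (X : Type*) [NormedAddCommGroup X] [InnerProductSpace ℝ X]
    (V₁ V₂ : Submodule ℝ X) [FiniteDimensional ℝ V₁] [FiniteDimensional ℝ V₂]
    (g₁ : SchwartzMap V₁ ℂ) (g₂ : SchwartzMap V₂ ℂ) :
    ∃ g : SchwartzMap ↥(V₁ ⊔ V₂) ℂ,
      ∀ y : X, g₁ (V₁.orthogonalProjectionOnto y) * g₂ (V₂.orthogonalProjectionOnto y) =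
        g ((V₁ ⊔ V₂).orthogonalProjectionOnto y) := by
  set V : Submodule ℝ X := V₁ ⊔ V₂ with hV
  let P₁ : ↥V →L[ℝ] V₁ := V₁.orthogonalProjectionOnto.comp (Submodule.subtypeL V)
  let P₂ : ↥V →L[ℝ] V₂ := V₂.orthogonalProjectionOnto.comp (Submodule.subtypeL V)
  have hsub : ‖Submodule.subtypeL V‖ ≤ 1 := by
    refine ContinuousLinearMap.opNorm_le_bound _ zero_le_one fun v => by simp
  have hP₁ : ‖P₁‖ ≤ 1 := by
    refine le_trans (ContinuousLinearMap.opNorm_comp_le _ _) ?_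
    calc ‖V₁.orthogonalProjectionOnto‖ * ‖Submodule.subtypeL V‖ ≤ 1 * 1 := by
          gcongr <;> first | exact Submodule.orthogonalProjectionOnto_norm_le _ | exact hsub | positivity
      _ = 1 := by ring
  have hP₂ : ‖P₂‖ ≤ 1 := by
    refine le_trans (ContinuousLinearMap.opNorm_comp_le _ _) ?_
    calc ‖V₂.orthogonalProjectionOnto‖ * ‖Submodule.subtypeL V‖ ≤ 1 * 1 := by
          gcongr <;> first | exact Submodule.orthogonalProjectionOnto_norm_le _ | exact hsub | positivity
      _ = 1 := by ring
  -- antilipschitz bound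
  obtain ⟨K, hK0, hKa⟩ : ∃ K > 0, AntilipschitzWith K ⇑(P₁.prod P₂) := by
    apply (P₁.prod P₂ : ↥V →ₗ[ℝ] V₁ × V₂).exists_antilipschitzWith
    rw [LinearMap.ker_eq_bot]
    intro v w hvw
    have h1 : P₁ (v - w) = 0 ∧ P₂ (v - w) = 0 := by
      have : P₁ v = P₁ w ∧ P₂ v = P₂ w := Prod.mk.injEq _ _ _ _ ▸ Prod.ext_iff.mp hvw
      constructor <;> simp [map_sub, this.1, this.2]
    have hm : ((v - w : ↥V) : X) ∈ Vᗮ := by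
      have e1 : ((v - w : ↥V) : X) ∈ V₁ᗮ := Submodule.orthogonalProjectionOnto_eq_zero_iff.mp h1.1
      have e2 : ((v - w : ↥V) : X) ∈ V₂ᗮ := Submodule.orthogonalProjectionOnto_eq_zero_iff.mp h1.2
      exact (Submodule.inf_orthogonal V₁ V₂) ▸ (⟨e1, e2⟩ : _ ∈ V₁ᗮ ⊓ V₂ᗮ)
    have : ((v - w : ↥V) : X) = 0 := by
      have hmem : ((v - w : ↥V) : X) ∈ V ⊓ Vᗮ := ⟨(v - w).2, hm⟩
      rwa [Submodule.inf_orthogonal_eq_bot, Submodule.mem_bot] at hmem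
    have : (v - w : ↥V) = 0 := Subtype.ext this
    exact sub_eq_zero.mp this
  have hvle : ∀ v : ↥V, ‖v‖ ≤ (K : ℝ) * ((1 + ‖P₁ v‖) * (1 + ‖P₂ v‖)) := by
    intro v
    have h0 : (P₁.prod P₂) 0 = 0 := map_zero _
    have := hKa.le_mul_dist v 0
    simp only [dist_zero_right, h0, dist_eq_norm, sub_zero] at this
    refine this.trans ?_
    have hn : ‖(P₁.prod P₂) v‖ ≤ (1 + ‖P₁ v‖) * (1 + ‖P₂ v‖) := by
      have : ‖(P₁.prod P₂) v‖ = max ‖P₁ v‖ ‖P₂ v‖ := rfl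
      rw [this]
      have a1 : ‖P₁ v‖ ≤ (1 + ‖P₁ v‖) * (1 + ‖P₂ v‖) := by nlinarith [norm_nonneg (P₁ v), norm_nonneg (P₂ v)]
      have a2 : ‖P₂ v‖ ≤ (1 + ‖P₁ v‖) * (1 + ‖P₂ v‖) := by nlinarith [norm_nonneg (P₁ v), norm_nonneg (P₂ v)]
      exact max_le a1 a2
    exact mul_le_mul_of_nonneg_left hn (by positivity)
  have smooth : ContDiff ℝ ∞ (fun v : ↥V => g₁ (P₁ v) * g₂ (P₂ v)) := by
    exact (g₁.smooth'.comp P₁.contDiff).mul (g₂.smooth'.comp P₂.contDiff)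
  refine ⟨⟨fun v => g₁ (P₁ v) * g₂ (P₂ v), smooth, ?_⟩, ?_⟩
  · intro k n
    set S₁ : ℝ := 2 ^ k * ((Finset.Iic (k, n)).sup (fun m => SchwartzMap.seminorm ℝ m.1 m.2)) g₁
    set S₂ : ℝ := 2 ^ k * ((Finset.Iic (k, n)).sup (fun m => SchwartzMap.seminorm ℝ m.1 m.2)) g₂
    have hS₁ : 0 ≤ S₁ := by positivity
    have hS₂ : 0 ≤ S₂ := by positivity
    refine ⟨(K : ℝ) ^ k * ((∑ i ∈ Finset.range (n + 1), (n.choose i : ℝ)) * (S₁ * S₂)), fun v => ?_⟩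
    have hmul : ‖iteratedFDeriv ℝ n (fun v : ↥V => g₁ (P₁ v) * g₂ (P₂ v)) v‖ ≤
        ∑ i ∈ Finset.range (n + 1), (n.choose i : ℝ) *
          ‖iteratedFDeriv ℝ i (fun w => g₁ (P₁ w)) v‖ *
          ‖iteratedFDeriv ℝ (n - i) (fun w => g₂ (P₂ w)) v‖ := by
      exact norm_iteratedFDeriv_mul_le (𝕜 := ℝ) (N := ∞)
        (g₁.smooth'.comp P₁.contDiff) (g₂.smooth'.comp P₂.contDiff) v
        (by exact_mod_cast le_top)
    have key : ∀ i ∈ Finset.range (n + 1),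
        ((1 + ‖P₁ v‖) * (1 + ‖P₂ v‖)) ^ k *
          ((n.choose i : ℝ) * ‖iteratedFDeriv ℝ i (fun w => g₁ (P₁ w)) v‖ *
            ‖iteratedFDeriv ℝ (n - i) (fun w => g₂ (P₂ w)) v‖) ≤
          (n.choose i : ℝ) * (S₁ * S₂) := by
      intro i hi
      rw [Finset.mem_range] at hi
      have hi' : i ≤ n := Nat.lt_succ_iff.mp hi
      have b₁ : ‖iteratedFDeriv ℝ i (fun w => g₁ (P₁ w)) v‖ ≤ ‖iteratedFDeriv ℝ i g₁ (P₁ v)‖ :=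
        norm_iteratedFDeriv_schwartz_comp_le g₁ P₁ hP₁ i v
      have b₂ : ‖iteratedFDeriv ℝ (n - i) (fun w => g₂ (P₂ w)) v‖ ≤
          ‖iteratedFDeriv ℝ (n - i) g₂ (P₂ v)‖ :=
        norm_iteratedFDeriv_schwartz_comp_le g₂ P₂ hP₂ (n - i) v
      have c₁ : (1 + ‖P₁ v‖) ^ k * ‖iteratedFDeriv ℝ i g₁ (P₁ v)‖ ≤ S₁ :=
        SchwartzMap.one_add_le_sup_seminorm_apply (m := (k, n)) le_rfl hi' g₁ (P₁ v)
      have c₂ : (1 + ‖P₂ v‖) ^ k * ‖iteratedFDeriv ℝ (n - i) g₂ (P₂ v)‖ ≤ S₂ :=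
        SchwartzMap.one_add_le_sup_seminorm_apply (m := (k, n)) le_rfl (Nat.sub_le n i) g₂ (P₂ v)
      calc ((1 + ‖P₁ v‖) * (1 + ‖P₂ v‖)) ^ k *
            ((n.choose i : ℝ) * ‖iteratedFDeriv ℝ i (fun w => g₁ (P₁ w)) v‖ *
              ‖iteratedFDeriv ℝ (n - i) (fun w => g₂ (P₂ w)) v‖)
          ≤ ((1 + ‖P₁ v‖) * (1 + ‖P₂ v‖)) ^ k *
            ((n.choose i : ℝ) * ‖iteratedFDeriv ℝ i g₁ (P₁ v)‖ *
              ‖iteratedFDeriv ℝ (n - i) g₂ (P₂ v)‖) := by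
            refine mul_le_mul_of_nonneg_left ?_ (by positivity)
            exact mul_le_mul (mul_le_mul_of_nonneg_left b₁ (Nat.cast_nonneg _)) b₂
              (norm_nonneg _) (by positivity)
        _ = (n.choose i : ℝ) *
              (((1 + ‖P₁ v‖) ^ k * ‖iteratedFDeriv ℝ i g₁ (P₁ v)‖) *
               ((1 + ‖P₂ v‖) ^ k * ‖iteratedFDeriv ℝ (n - i) g₂ (P₂ v)‖)) := by
            rw [mul_pow]; ring
        _ ≤ (n.choose i : ℝ) * (S₁ * S₂) :=
            mul_le_mul_of_nonneg_left (mul_le_mul c₁ c₂ (by positivity) hS₁) (Nat.cast_nonneg _)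
    calc ‖v‖ ^ k * ‖iteratedFDeriv ℝ n (fun v : ↥V => g₁ (P₁ v) * g₂ (P₂ v)) v‖
        ≤ ((K : ℝ) * ((1 + ‖P₁ v‖) * (1 + ‖P₂ v‖))) ^ k *
            (∑ i ∈ Finset.range (n + 1), (n.choose i : ℝ) *
              ‖iteratedFDeriv ℝ i (fun w => g₁ (P₁ w)) v‖ *
              ‖iteratedFDeriv ℝ (n - i) (fun w => g₂ (P₂ w)) v‖) :=
          mul_le_mul (pow_le_pow_left₀ (norm_nonneg v) (hvle v) k) hmul (norm_nonneg _)
            (by positivity)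
      _ = (K : ℝ) ^ k * ∑ i ∈ Finset.range (n + 1),
            ((1 + ‖P₁ v‖) * (1 + ‖P₂ v‖)) ^ k *
              ((n.choose i : ℝ) * ‖iteratedFDeriv ℝ i (fun w => g₁ (P₁ w)) v‖ *
                ‖iteratedFDeriv ℝ (n - i) (fun w => g₂ (P₂ w)) v‖) := by
          rw [mul_pow, mul_assoc, Finset.mul_sum]
      _ ≤ (K : ℝ) ^ k * ∑ i ∈ Finset.range (n + 1), (n.choose i : ℝ) * (S₁ * S₂) := by
          exact mul_le_mul_of_nonneg_left (Finset.sum_le_sum key) (by positivity)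
      _ = (K : ℝ) ^ k * ((∑ i ∈ Finset.range (n + 1), (n.choose i : ℝ)) * (S₁ * S₂)) := by
          rw [← Finset.sum_mul]
  · intro y
    have h₁ : P₁ (V.orthogonalProjectionOnto y) = V₁.orthogonalProjectionOnto y := by
      exact
        Submodule.orthogonalProjectionOnto_starProjection_of_le (le_sup_left : V₁ ≤ V) y
    have h₂ : P₂ (V.orthogonalProjectionOnto y) = V₂.orthogonalProjectionOnto y := by
      exact
        Submodule.orthogonalProjectionOnto_starProjection_of_le (le_sup_right : V₂ ≤ V) y
    show _ = g₁ (P₁ (V.orthogonalProjectionOnto y)) * g₂ (P₂ (V.orthogonalProjectionOnto y))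
    rw [h₁, h₂]
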